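/- Let ρ be a density operator on H_A ⊗ H_B ⊗ H_C ⊗ H_D with observables A_i, B_j, C_k, D_l (i,j,k,l ∈ {0,1}) of operator norm ≤ 1. Suppose |⟨A_iB_jC_kD_l⟩ − ⟨A_iB_j⟩⟨C_kD_l⟩| ≤ δ for all i,j,k,l. Then the four-party Svetlichny expression S₄ = ⟨A₀B₀C₀D₀⟩ − Σ(single-flip terms) − Σ(double-flip terms with one index 1 in each pair pattern) + Σ(triple-flip terms) + ⟨A₁B₁C₁D₁⟩ (with signs as in Seevinck–Svetlichny, i.e., sign (−1)^{t(t+1)/2} where t is the number of indices equal to 1) satisfies S₄ ≤ 8 + 16δ. -/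

import Mathlib

open scoped Matrix.Norms.L2Operator Kronecker ComplexOrder
set_option linter.unusedSectionVars false
namespace SvetAux
open Matrix

variable {n m : Type*} [Fintype n] [Fintype m] [DecidableEq n] [DecidableEq m]

lemma conjTranspose_kron (M : Matrix n n ℂ) (N : Matrix m m ℂ) :
    (M ⊗ₖ N)ᴴ = Mᴴ ⊗ₖ Nᴴ := by
  ext ⟨i1, i2⟩ ⟨j1, j2⟩
  simp [Matrix.conjTranspose_apply, Matrix.kroneckerMap_apply, star_mul']

open scoped MatrixOrder in
lemma psd_eq_conj {M : Matrix n n ℂ} (h : M.PosSemidef) : ∃ P : Matrix n n ℂ, M = Pᴴ * P := by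
  obtain ⟨B, hB⟩ := CStarAlgebra.nonneg_iff_eq_star_mul_self.mp h.nonneg
  exact ⟨B, hB⟩

lemma psd_kron {M : Matrix n n ℂ} {N : Matrix m m ℂ}
    (hM : M.PosSemidef) (hN : N.PosSemidef) : (M ⊗ₖ N).PosSemidef := by
  obtain ⟨P, rfl⟩ := psd_eq_conj hM
  obtain ⟨Q, rfl⟩ := psd_eq_conj hN
  rw [Matrix.mul_kronecker_mul, ← conjTranspose_kron]
  exact Matrix.posSemidef_conjTranspose_mul_self _

lemma psd_of_two_smul {M : Matrix n n ℂ} (h : ((2:ℂ) • M).PosSemidef) :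
    M.PosSemidef := by
  have : M = ((2:ℂ)⁻¹ : ℂ) • ((2:ℂ) • M) := by
    rw [smul_smul]; norm_num
  rw [this]
  rw [Matrix.posSemidef_iff_dotProduct_mulVec] at h ⊢
  refine ⟨?_, ?_⟩
  · have h1 := h.1
    unfold Matrix.IsHermitian at *
    rw [Matrix.conjTranspose_smul, h1]
    congr 1
    simp
  · intro x
    have h2 := h.2 x
    rw [Matrix.smul_mulVec, dotProduct_smul]
    have : (0:ℂ) ≤ (2:ℂ)⁻¹ := by
      rw [Complex.le_def]; norm_num
    exact mul_nonneg this h2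


lemma one_sub_psd (M : Matrix n n ℂ) (hM : M.IsHermitian) (hn : ‖M‖ ≤ 1) :
    (1 - M).PosSemidef := by
  rw [Matrix.posSemidef_iff_dotProduct_mulVec]
  constructor
  · exact (Matrix.isHermitian_one).sub hM
  · intro x
    have hherm : star (star x ⬝ᵥ M *ᵥ x) = star x ⬝ᵥ M *ᵥ x := by
      calc star (star x ⬝ᵥ M *ᵥ x) = star (M *ᵥ x) ⬝ᵥ x := (Matrix.star_dotProduct _ _).symm
        _ = (star x ᵥ* Mᴴ) ⬝ᵥ x := by rw [Matrix.star_mulVec]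
        _ = (star x ᵥ* M) ⬝ᵥ x := by rw [hM.eq]
        _ = star x ⬝ᵥ M *ᵥ x := by rw [← Matrix.dotProduct_mulVec]
    set x' : EuclideanSpace ℂ n := (EuclideanSpace.equiv n ℂ).symm x with hx'
    have hinner : (inner ℂ x' ((EuclideanSpace.equiv n ℂ).symm (M *ᵥ x)) : ℂ)
        = star x ⬝ᵥ M *ᵥ x := by rw [EuclideanSpace.inner_eq_star_dotProduct, dotProduct_comm]; rfl
    have hcs : ‖(inner ℂ x' ((EuclideanSpace.equiv n ℂ).symm (M *ᵥ x)) : ℂ)‖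
        ≤ ‖x'‖ * ‖x'‖ := by
      calc ‖(inner ℂ x' ((EuclideanSpace.equiv n ℂ).symm (M *ᵥ x)) : ℂ)‖
          ≤ ‖x'‖ * ‖(EuclideanSpace.equiv n ℂ).symm (M *ᵥ x)‖ := norm_inner_le_norm _ _
        _ ≤ ‖x'‖ * (‖M‖ * ‖x'‖) := by
            refine mul_le_mul_of_nonneg_left ?_ (norm_nonneg _)
            exact M.l2_opNorm_mulVec x'
        _ ≤ ‖x'‖ * (1 * ‖x'‖) := by
            refine mul_le_mul_of_nonneg_left ?_ (norm_nonneg _)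
            exact mul_le_mul_of_nonneg_right hn (norm_nonneg _)
        _ = ‖x'‖ * ‖x'‖ := by ring
    have hself : star x ⬝ᵥ x = (inner ℂ x' x' : ℂ) := by
      rw [EuclideanSpace.inner_eq_star_dotProduct, dotProduct_comm]; rfl
    have hre : (star x ⬝ᵥ x).re = ‖x'‖ ^ 2 := by
      rw [hself]
      exact (norm_sq_eq_re_inner (𝕜 := ℂ) x').symm
    have him2 : (star x ⬝ᵥ x).im = 0 := by
      rw [hself]
      exact inner_self_im (𝕜 := ℂ) x'
    rw [Matrix.sub_mulVec, dotProduct_sub, Matrix.one_mulVec]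
    rw [Complex.le_def]
    constructor
    · simp only [Complex.sub_re, Complex.zero_re]
      have h1 : (star x ⬝ᵥ M *ᵥ x).re ≤ ‖(star x ⬝ᵥ M *ᵥ x)‖ := Complex.re_le_norm _
      rw [hinner] at hcs
      rw [hre]
      nlinarith [hcs, h1]
    · simp only [Complex.sub_im, Complex.zero_im]
      have him : (star x ⬝ᵥ M *ᵥ x).im = 0 := by
        have := congrArg Complex.im hherm
        simp only [Complex.star_def, Complex.conj_im] at this
        linarith
      rw [him, him2]
      norm_num

lemma one_add_psd (M : Matrix n n ℂ) (hM : M.IsHermitian) (hn : ‖M‖ ≤ 1) :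
    (1 + M).PosSemidef := by
  have := one_sub_psd (-M) (by rw [Matrix.IsHermitian] at *; simp [hM]) (by rwa [norm_neg])
  rwa [sub_neg_eq_add] at this

lemma sand_one : (1 - (1 : Matrix n n ℂ)).PosSemidef ∧ (1 + (1 : Matrix n n ℂ)).PosSemidef := by
  constructor
  · rw [sub_self]; exact Matrix.PosSemidef.zero
  · exact Matrix.PosSemidef.add Matrix.PosSemidef.one Matrix.PosSemidef.one

lemma sand_kron (M : Matrix n n ℂ) (N : Matrix m m ℂ)
    (hM1 : (1 - M).PosSemidef) (hM2 : (1 + M).PosSemidef)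
    (hN1 : (1 - N).PosSemidef) (hN2 : (1 + N).PosSemidef) :
    (1 - M ⊗ₖ N).PosSemidef ∧ (1 + M ⊗ₖ N).PosSemidef := by
  have e1 : (2:ℂ) • (1 - M ⊗ₖ N) = (1 - M) ⊗ₖ (1 + N) + (1 + M) ⊗ₖ (1 - N) := by
    ext ⟨i1, i2⟩ ⟨j1, j2⟩
    simp [Matrix.kroneckerMap_apply, Matrix.one_apply, Matrix.sub_apply, Matrix.add_apply,
      Matrix.smul_apply, Prod.ext_iff]
    split_ifs <;> simp_all <;> ring
  have e2 : (2:ℂ) • (1 + M ⊗ₖ N) = (1 - M) ⊗ₖ (1 - N) + (1 + M) ⊗ₖ (1 + N) := by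
    ext ⟨i1, i2⟩ ⟨j1, j2⟩
    simp [Matrix.kroneckerMap_apply, Matrix.one_apply, Matrix.sub_apply, Matrix.add_apply,
      Matrix.smul_apply, Prod.ext_iff]
    split_ifs <;> simp_all <;> ring
  constructor
  · exact psd_of_two_smul (e1 ▸ (psd_kron hM1 hN2).add (psd_kron hM2 hN1))
  · exact psd_of_two_smul (e2 ▸ (psd_kron hM1 hN1).add (psd_kron hM2 hN2))

lemma trace_re_nonneg (M : Matrix n n ℂ) (h : M.PosSemidef) : 0 ≤ M.trace.re := by
  have key : ∀ i, 0 ≤ (M i i).re := by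
    intro i
    have := h.re_dotProduct_nonneg (Pi.single i 1)
    simpa [dotProduct, Pi.single_apply, apply_ite] using this
  rw [Matrix.trace, Complex.re_sum]
  exact Finset.sum_nonneg fun i _ => key i

lemma trace_mul_re_nonneg (X ρ : Matrix n n ℂ) (hX : X.PosSemidef) (hρ : ρ.PosSemidef) :
    0 ≤ ((X * ρ).trace).re := by
  obtain ⟨P, rfl⟩ := psd_eq_conj hX
  rw [Matrix.mul_assoc, Matrix.trace_mul_comm]
  exact trace_re_nonneg _ (hρ.mul_mul_conjTranspose_same P)

lemma exp_bound (M ρ : Matrix n n ℂ) (h1 : (1 - M).PosSemidef) (h2 : (1 + M).PosSemidef)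
    (hρ : ρ.PosSemidef) (hρtr : ρ.trace = 1) : |((M * ρ).trace).re| ≤ 1 := by
  have u1 := trace_mul_re_nonneg _ _ h1 hρ
  have u2 := trace_mul_re_nonneg _ _ h2 hρ
  rw [Matrix.sub_mul, Matrix.one_mul, Matrix.trace_sub] at u1
  rw [Matrix.add_mul, Matrix.one_mul, Matrix.trace_add] at u2
  rw [hρtr] at u1 u2
  simp only [Complex.sub_re, Complex.add_re, Complex.one_re] at u1 u2
  rw [abs_le]
  constructor <;> linarith

lemma svet_arith (x00 x01 x10 x11 y00 y01 y10 y11 : ℝ)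
    (hx00 : |x00| ≤ 1) (hx01 : |x01| ≤ 1) (hx10 : |x10| ≤ 1) (hx11 : |x11| ≤ 1)
    (hy00 : |y00| ≤ 1) (hy01 : |y01| ≤ 1) (hy10 : |y10| ≤ 1) (hy11 : |y11| ≤ 1) :
    x00*y00 - x00*y01 - x00*y10 - x00*y11
    - x01*y00 - x01*y01 - x01*y10 + x01*y11
    - x10*y00 - x10*y01 - x10*y10 + x10*y11
    - x11*y00 + x11*y01 + x11*y10 + x11*y11 ≤ 8 := by
  obtain ⟨a1, a2⟩ := abs_le.mp hx00
  obtain ⟨b1, b2⟩ := abs_le.mp hx01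
  obtain ⟨c1, c2⟩ := abs_le.mp hx10
  obtain ⟨d1, d2⟩ := abs_le.mp hx11
  obtain ⟨e1, e2⟩ := abs_le.mp hy00
  obtain ⟨f1, f2⟩ := abs_le.mp hy01
  obtain ⟨g1, g2⟩ := abs_le.mp hy10
  obtain ⟨k1, k2⟩ := abs_le.mp hy11
  set f0 : ℝ := y00 - y01 - y10 - y11 with hf0
  set f1' : ℝ := -y00 - y01 - y10 + y11 with hf1
  have hsum : |f0| + |f1'| ≤ 4 := by
    rcases abs_cases f0 with ⟨h0, _⟩ | ⟨h0, _⟩ <;>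
      rcases abs_cases f1' with ⟨h1, _⟩ | ⟨h1, _⟩ <;>
      rw [h0, h1] <;> (rw [hf0, hf1]; linarith)
  have hx0211 : |x00 - x11| ≤ 2 := by rw [abs_le]; constructor <;> linarith
  have hx0110 : |x01 + x10| ≤ 2 := by rw [abs_le]; constructor <;> linarith
  have t1 : (x00 - x11) * f0 ≤ 2 * |f0| := by
    calc (x00 - x11) * f0 ≤ |(x00 - x11) * f0| := le_abs_self _
      _ = |x00 - x11| * |f0| := abs_mul _ _
      _ ≤ 2 * |f0| := mul_le_mul_of_nonneg_right hx0211 (abs_nonneg _)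
  have t2 : (x01 + x10) * f1' ≤ 2 * |f1'| := by
    calc (x01 + x10) * f1' ≤ |(x01 + x10) * f1'| := le_abs_self _
      _ = |x01 + x10| * |f1'| := abs_mul _ _
      _ ≤ 2 * |f1'| := mul_le_mul_of_nonneg_right hx0110 (abs_nonneg _)
  have key : x00*y00 - x00*y01 - x00*y10 - x00*y11
      - x01*y00 - x01*y01 - x01*y10 + x01*y11
      - x10*y00 - x10*y01 - x10*y10 + x10*y11
      - x11*y00 + x11*y01 + x11*y10 + x11*y11
      = (x00 - x11) * f0 + (x01 + x10) * f1' := by rw [hf0, hf1]; ring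
  rw [key]
  linarith

end SvetAux


set_option maxHeartbeats 1000000

/-- Four-party Svetlichny bound from bipartite (AB|CD) clustering: if
`|⟨A_iB_jC_kD_l⟩ − ⟨A_iB_j⟩⟨C_kD_l⟩| ≤ δ` for all `i,j,k,l`, then the Seevinck–Svetlichny
expression `S₄ = Σ (−1)^{t(t+1)/2} ⟨A_iB_jC_kD_l⟩` (with `t` the number of indices equal
to 1) satisfies `S₄ ≤ 8 + 16δ`. -/
theorem stmt_6 {dA dB dC dD : Type*} [Fintype dA] [Fintype dB] [Fintype dC] [Fintype dD]
    [DecidableEq dA] [DecidableEq dB] [DecidableEq dC] [DecidableEq dD]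
    (ρ : Matrix (((dA × dB) × dC) × dD) (((dA × dB) × dC) × dD) ℂ)
    (hρ : ρ.PosSemidef) (hρtr : ρ.trace = 1) (δ : ℝ)
    (A : Fin 2 → Matrix dA dA ℂ) (B : Fin 2 → Matrix dB dB ℂ)
    (C : Fin 2 → Matrix dC dC ℂ) (D : Fin 2 → Matrix dD dD ℂ)
    (hA : ∀ i, (A i).IsHermitian) (hB : ∀ j, (B j).IsHermitian)
    (hC : ∀ k, (C k).IsHermitian) (hD : ∀ l, (D l).IsHermitian)
    (hAn : ∀ i, ‖A i‖ ≤ 1) (hBn : ∀ j, ‖B j‖ ≤ 1)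
    (hCn : ∀ k, ‖C k‖ ≤ 1) (hDn : ∀ l, ‖D l‖ ≤ 1)
    (hcl : ∀ i j k l : Fin 2,
      |(((A i ⊗ₖ B j ⊗ₖ C k ⊗ₖ D l) * ρ).trace).re -
        (((A i ⊗ₖ B j ⊗ₖ (1 : Matrix dC dC ℂ) ⊗ₖ (1 : Matrix dD dD ℂ)) * ρ).trace).re *
          ((((1 : Matrix dA dA ℂ) ⊗ₖ (1 : Matrix dB dB ℂ) ⊗ₖ C k ⊗ₖ D l) * ρ).trace).re|
        ≤ δ) :
    (∑ i : Fin 2, ∑ j : Fin 2, ∑ k : Fin 2, ∑ l : Fin 2,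
      ((-1 : ℝ)) ^ (((i.val + j.val + k.val + l.val) * (i.val + j.val + k.val + l.val + 1)) / 2) *
        (((A i ⊗ₖ B j ⊗ₖ C k ⊗ₖ D l) * ρ).trace).re) ≤ 8 + 16 * δ := by
  classical
  have sA1 : ∀ i, (1 - A i).PosSemidef := fun i => SvetAux.one_sub_psd _ (hA i) (hAn i)
  have sA2 : ∀ i, (1 + A i).PosSemidef := fun i => SvetAux.one_add_psd _ (hA i) (hAn i)
  have sB1 : ∀ j, (1 - B j).PosSemidef := fun j => SvetAux.one_sub_psd _ (hB j) (hBn j)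
  have sB2 : ∀ j, (1 + B j).PosSemidef := fun j => SvetAux.one_add_psd _ (hB j) (hBn j)
  have sC1 : ∀ k, (1 - C k).PosSemidef := fun k => SvetAux.one_sub_psd _ (hC k) (hCn k)
  have sC2 : ∀ k, (1 + C k).PosSemidef := fun k => SvetAux.one_add_psd _ (hC k) (hCn k)
  have sD1 : ∀ l, (1 - D l).PosSemidef := fun l => SvetAux.one_sub_psd _ (hD l) (hDn l)
  have sD2 : ∀ l, (1 + D l).PosSemidef := fun l => SvetAux.one_add_psd _ (hD l) (hDn l)
  have sAB : ∀ i j, (1 - A i ⊗ₖ B j).PosSemidef ∧ (1 + A i ⊗ₖ B j).PosSemidef :=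
    fun i j => SvetAux.sand_kron _ _ (sA1 i) (sA2 i) (sB1 j) (sB2 j)
  have sABCD : ∀ i j k l, (1 - A i ⊗ₖ B j ⊗ₖ C k ⊗ₖ D l).PosSemidef ∧
      (1 + A i ⊗ₖ B j ⊗ₖ C k ⊗ₖ D l).PosSemidef := by
    intro i j k l
    have h1 := SvetAux.sand_kron _ _ (sAB i j).1 (sAB i j).2 (sC1 k) (sC2 k)
    exact SvetAux.sand_kron _ _ h1.1 h1.2 (sD1 l) (sD2 l)
  have sAB11 : ∀ i j, (1 - A i ⊗ₖ B j ⊗ₖ (1 : Matrix dC dC ℂ) ⊗ₖ (1 : Matrix dD dD ℂ)).PosSemidef ∧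
      (1 + A i ⊗ₖ B j ⊗ₖ (1 : Matrix dC dC ℂ) ⊗ₖ (1 : Matrix dD dD ℂ)).PosSemidef := by
    intro i j
    have h1 := SvetAux.sand_kron (A i ⊗ₖ B j) (1 : Matrix dC dC ℂ) (sAB i j).1 (sAB i j).2
      SvetAux.sand_one.1 SvetAux.sand_one.2
    exact SvetAux.sand_kron _ _ h1.1 h1.2 SvetAux.sand_one.1 SvetAux.sand_one.2
  have s11CD : ∀ k l, (1 - (1 : Matrix dA dA ℂ) ⊗ₖ (1 : Matrix dB dB ℂ) ⊗ₖ C k ⊗ₖ D l).PosSemidef ∧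
      (1 + (1 : Matrix dA dA ℂ) ⊗ₖ (1 : Matrix dB dB ℂ) ⊗ₖ C k ⊗ₖ D l).PosSemidef := by
    intro k l
    have h0 := SvetAux.sand_kron (1 : Matrix dA dA ℂ) (1 : Matrix dB dB ℂ)
      SvetAux.sand_one.1 SvetAux.sand_one.2 SvetAux.sand_one.1 SvetAux.sand_one.2
    have h1 := SvetAux.sand_kron _ _ h0.1 h0.2 (sC1 k) (sC2 k)
    exact SvetAux.sand_kron _ _ h1.1 h1.2 (sD1 l) (sD2 l)
  have hx : ∀ i j,
      |(((A i ⊗ₖ B j ⊗ₖ (1 : Matrix dC dC ℂ) ⊗ₖ (1 : Matrix dD dD ℂ)) * ρ).trace).re| ≤ 1 :=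
    fun i j => SvetAux.exp_bound _ _ (sAB11 i j).1 (sAB11 i j).2 hρ hρtr
  have hy : ∀ k l,
      |((((1 : Matrix dA dA ℂ) ⊗ₖ (1 : Matrix dB dB ℂ) ⊗ₖ C k ⊗ₖ D l) * ρ).trace).re| ≤ 1 :=
    fun k l => SvetAux.exp_bound _ _ (s11CD k l).1 (s11CD k l).2 hρ hρtr
  have hcl' := fun i j k l => abs_le.mp (hcl i j k l)
  have key := SvetAux.svet_arith _ _ _ _ _ _ _ _
    (hx 0 0) (hx 0 1) (hx 1 0) (hx 1 1) (hy 0 0) (hy 0 1) (hy 1 0) (hy 1 1)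
  simp only [Fin.sum_univ_two, Fin.val_zero, Fin.val_one]
  norm_num
  linarith [key,
    (hcl' 0 0 0 0).1, (hcl' 0 0 0 0).2, (hcl' 0 0 0 1).1, (hcl' 0 0 0 1).2,
    (hcl' 0 0 1 0).1, (hcl' 0 0 1 0).2, (hcl' 0 0 1 1).1, (hcl' 0 0 1 1).2,
    (hcl' 0 1 0 0).1, (hcl' 0 1 0 0).2, (hcl' 0 1 0 1).1, (hcl' 0 1 0 1).2,
    (hcl' 0 1 1 0).1, (hcl' 0 1 1 0).2, (hcl' 0 1 1 1).1, (hcl' 0 1 1 1).2,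
    (hcl' 1 0 0 0).1, (hcl' 1 0 0 0).2, (hcl' 1 0 0 1).1, (hcl' 1 0 0 1).2,
    (hcl' 1 0 1 0).1, (hcl' 1 0 1 0).2, (hcl' 1 0 1 1).1, (hcl' 1 0 1 1).2,
    (hcl' 1 1 0 0).1, (hcl' 1 1 0 0).2, (hcl' 1 1 0 1).1, (hcl' 1 1 0 1).2,
    (hcl' 1 1 1 0).1, (hcl' 1 1 1 0).2, (hcl' 1 1 1 1).1, (hcl' 1 1 1 1).2]
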